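/- For every extraction grammar G associated with k variables, there exists an equivalent functional extraction grammar G' (i.e., every ref-word generated by G' is valid, and G' defines the same spanner as G); moreover, if G is in Chomsky Normal Form then G' can be taken with at most 3^{2k}·|V| nonterminals, where V is the nonterminal set of G. -/

import Mathlib

/-- A variable operation: `(x, true)` is `⊢x` (open), `(x, false)` is `⊣x` (close). -/
abbrev VarOp (X : Type) : Type := X × Bool

/-- A ref-word: a word over the extended alphabet `Σ ∪ Γ_X`. -/
abbrev RefWord (T X : Type) : Type := List (T ⊕ VarOp X)

/-- The morphism `clr` erasing variable operations and fixing letters of `Σ`. -/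
def clr {T X : Type} (r : RefWord T X) : List T :=
  r.filterMap (fun a => match a with | Sum.inl t => some t | Sum.inr _ => none)

/-- A ref-word is valid for `X`: each `⊢x` and `⊣x` occurs exactly once, `⊢x` before `⊣x`. -/
def ValidRef {T X : Type} (r : RefWord T X) : Prop :=
  ∀ x : X, ∃ u v w : RefWord T X,
    r = u ++ Sum.inr (x, true) :: (v ++ Sum.inr (x, false) :: w) ∧
    ∀ b : Bool, Sum.inr (x, b) ∉ u ∧ Sum.inr (x, b) ∉ v ∧ Sum.inr (x, b) ∉ w

/-- `μ` is the `(X,d)`-mapping `μ^r` induced by the ref-word `r`. -/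
def MappingOf {T X : Type} (r : RefWord T X) (μ : X → ℕ × ℕ) : Prop :=
  ∀ x : X, ∃ u v w : RefWord T X,
    r = u ++ Sum.inr (x, true) :: (v ++ Sum.inr (x, false) :: w) ∧
    μ x = ((clr u).length + 1, (clr u).length + 1 + (clr v).length)

/-- The spanner defined by an extraction grammar (a CFG over `Σ ∪ Γ_X`). -/
def spanner {T X : Type} (G : ContextFreeGrammar (T ⊕ VarOp X)) (d : List T) :
    Set (X → ℕ × ℕ) :=
  {μ | ∃ r : RefWord T X, r ∈ G.language ∧ ValidRef r ∧ clr r = d ∧ MappingOf r μ}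

/-- A spanner is context-free if it is definable by an extraction grammar. -/
def IsCFSpanner {T X : Type} (S : List T → Set (X → ℕ × ℕ)) : Prop :=
  ∃ G : ContextFreeGrammar.{0} (T ⊕ VarOp X), ∀ d : List T, S d = spanner G d

/-- A grammar is in Chomsky Normal Form: every rule is `A → BC` or `A → a`. -/
def InCNF {U : Type} (G : ContextFreeGrammar U) : Prop :=
  ∀ r ∈ G.rules,
    (∃ B C : G.NT, r.output = [Symbol.nonterminal B, Symbol.nonterminal C]) ∨
    (∃ a : U, r.output = [Symbol.terminal a])

namespace Stmt11Aux

open ContextFreeGrammar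

/-! ### The per-variable automaton -/

def stepx : Fin 3 → Bool → Option (Fin 3)
  | 0, true => some 1
  | 1, false => some 2
  | _, _ => none

def runx : Fin 3 → List Bool → Option (Fin 3)
  | s, [] => some s
  | s, b :: l => (stepx s b).bind (fun s' => runx s' l)

lemma runx_zero_eq_two {l : List Bool} (h : runx 0 l = some 2) : l = [true, false] := by
  match l with
  | [] => exact absurd (Option.some_inj.mp h) (by decide)
  | [true] => exact absurd (Option.some_inj.mp h) (by decide)
  | [true, false] => rfl
  | true :: true :: l'' => simp [runx, stepx] at h
  | true :: false :: b'' :: l'' =>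
      simp [runx, stepx, show stepx 2 b'' = none by cases b'' <;> rfl] at h
  | false :: l' => simp [runx, stepx] at h

variable {T X : Type} [DecidableEq X]

abbrev Q (X : Type) := X → Fin 3

def stepP (q : Q X) : (T ⊕ VarOp X) → Option (Q X)
  | Sum.inl _ => some q
  | Sum.inr (y, b) => (stepx (q y) b).map (Function.update q y)

def runW : Q X → RefWord T X → Option (Q X)
  | q, [] => some q
  | q, a :: w => (stepP q a).bind (fun q' => runW q' w)

lemma runW_append (u v : RefWord T X) : ∀ q : Q X,
    runW q (u ++ v) = (runW q u).bind (fun p => runW p v) := by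
  induction u with
  | nil => intro q; rfl
  | cons a u ih =>
    intro q
    simp only [List.cons_append, runW]
    cases h : stepP (T := T) q a with
    | none => rfl
    | some q₁ => simp [ih]

def getx (x : X) : (T ⊕ VarOp X) → Option Bool
  | Sum.inl _ => none
  | Sum.inr (y, b) => if y = x then some b else none

lemma getx_inr_self (x : X) (b : Bool) : getx x (Sum.inr (x, b) : T ⊕ VarOp X) = some b := by
  simp [getx]

lemma getx_inr_ne {x y : X} (hxy : ¬ x = y) (b : Bool) :
    getx x (Sum.inr (y, b) : T ⊕ VarOp X) = none := by
  simp only [getx, if_neg (fun hh : y = x => absurd hh.symm hxy)]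

lemma runW_char (w : RefWord T X) : ∀ q q' : Q X,
    runW q w = some q' ↔ ∀ x, runx (q x) (w.filterMap (getx x)) = some (q' x) := by
  induction w with
  | nil =>
    intro q q'
    simp only [runW, List.filterMap_nil, runx, Option.some_inj]
    constructor
    · rintro rfl x; rfl
    · intro h; funext x; exact h x
  | cons a w ih =>
    intro q q'
    cases a with
    | inl t =>
      simpa only [runW, stepP, Option.bind_some,
        List.filterMap_cons_none (show getx (T := T) (X := X) _ (Sum.inl t) = none from rfl)]
        using ih q q'
    | inr yb =>
      obtain ⟨y, b⟩ := yb
      constructor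
      · intro h x
        simp only [runW, stepP] at h
        obtain ⟨s, hs, hrun⟩ := Option.bind_eq_some_iff.mp h
        obtain ⟨s', hs', rfl⟩ := Option.map_eq_some_iff.mp hs
        by_cases hxy : x = y
        · subst hxy
          rw [List.filterMap_cons_some (getx_inr_self x b)]
          simp only [runx, hs', Option.bind_some]
          have := (ih _ _).mp hrun x
          rwa [Function.update_self] at this
        · rw [List.filterMap_cons_none (getx_inr_ne hxy b)]
          have := (ih _ _).mp hrun x
          rwa [Function.update_of_ne hxy] at this
      · intro h
        have hy := h y
        rw [List.filterMap_cons_some (getx_inr_self y b)] at hy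
        simp only [runx] at hy
        obtain ⟨s, hs, hrun⟩ := Option.bind_eq_some_iff.mp hy
        simp only [runW, stepP, hs, Option.map_some, Option.bind_some]
        apply (ih _ _).mpr
        intro x
        by_cases hxy : x = y
        · subst hxy; rwa [Function.update_self]
        · rw [Function.update_of_ne hxy]
          have := h x
          rwa [List.filterMap_cons_none (getx_inr_ne hxy b)] at this

/-! ### run success iff valid -/

lemma filterMap_eq_cons {α β : Type*} {g : α → Option β} :
    ∀ {w : List α} {b : β} {l : List β}, w.filterMap g = b :: l →
    ∃ u c v, w = u ++ c :: v ∧ (∀ e ∈ u, g e = none) ∧ g c = some b ∧ v.filterMap g = l := by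
  intro w
  induction w with
  | nil => intro b l h; simp at h
  | cons a w ih =>
    intro b l h
    cases hga : g a with
    | none =>
      rw [List.filterMap_cons_none hga] at h
      obtain ⟨u, c, v, rfl, hu, hc, hv⟩ := ih h
      exact ⟨a :: u, c, v, rfl, by simpa [hga] using hu, hc, hv⟩
    | some b' =>
      rw [List.filterMap_cons_some hga] at h
      injection h with h1 h2
      exact ⟨[], a, w, rfl, by simp, h1 ▸ hga, h2⟩

lemma valid_of_runW {w : RefWord T X}
    (h : runW (fun _ => 0) w = some (fun _ => (2 : Fin 3))) :
    ∀ x : X, ∃ u v w' : RefWord T X,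
      w = u ++ Sum.inr (x, true) :: (v ++ Sum.inr (x, false) :: w') ∧
      ∀ b : Bool, Sum.inr (x, b) ∉ u ∧ Sum.inr (x, b) ∉ v ∧ Sum.inr (x, b) ∉ w' := by
  intro x
  have hx := (runW_char w _ _).mp h x
  have hops : w.filterMap (getx x) = [true, false] := runx_zero_eq_two hx
  obtain ⟨u, c, v0, rfl, hu, hc, hv0⟩ := filterMap_eq_cons hops
  obtain ⟨v, c', w', rfl, hv, hc', hw'⟩ := filterMap_eq_cons hv0
  have hcnone : ∀ (l : RefWord T X), (∀ e ∈ l, getx x e = none) →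
      ∀ b : Bool, Sum.inr (x, b) ∉ l := by
    intro l hl b hmem
    have := hl _ hmem
    rw [getx_inr_self] at this
    exact nomatch this
  have hceq : c = Sum.inr (x, true) := by
    match c with
    | Sum.inl t => exact absurd hc (by simp [getx])
    | Sum.inr (y, b) =>
      by_cases hyx : x = y
      · subst hyx
        rw [getx_inr_self] at hc
        rw [Option.some_inj.mp hc]
      · rw [getx_inr_ne hyx] at hc
        exact nomatch hc
  have hceq' : c' = Sum.inr (x, false) := by
    match c' with
    | Sum.inl t => exact absurd hc' (by simp [getx])
    | Sum.inr (y, b) =>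
      by_cases hyx : x = y
      · subst hyx
        rw [getx_inr_self] at hc'
        rw [Option.some_inj.mp hc']
      · rw [getx_inr_ne hyx] at hc'
        exact nomatch hc'
  refine ⟨u, v, w', by rw [hceq, hceq'], fun b => ⟨hcnone u hu b, hcnone v hv b,
    hcnone w' (List.filterMap_eq_nil_iff.mp hw') b⟩⟩

lemma runW_of_valid {w : RefWord T X}
    (h : ∀ x : X, ∃ u v w' : RefWord T X,
      w = u ++ Sum.inr (x, true) :: (v ++ Sum.inr (x, false) :: w') ∧
      ∀ b : Bool, Sum.inr (x, b) ∉ u ∧ Sum.inr (x, b) ∉ v ∧ Sum.inr (x, b) ∉ w') :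
    runW (fun _ => 0) w = some (fun _ => (2 : Fin 3)) := by
  apply (runW_char w _ _).mpr
  intro x
  obtain ⟨u, v, w', rfl, hnm⟩ := h x
  have hnone : ∀ (l : RefWord T X), (∀ b : Bool, Sum.inr (x, b) ∉ l) →
      l.filterMap (getx x) = [] := by
    intro l hl
    apply List.filterMap_eq_nil_iff.mpr
    intro e he
    match e with
    | Sum.inl t => rfl
    | Sum.inr (y, b) =>
      rw [getx_inr_ne (fun hxy : x = y => hl b (hxy ▸ he)) b]
  rw [List.filterMap_append, hnone u (fun b => (hnm b).1),
    List.filterMap_cons_some (getx_inr_self x true), List.filterMap_append,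
    hnone v (fun b => (hnm b).2.1), List.filterMap_cons_some (getx_inr_self x false),
    hnone w' (fun b => (hnm b).2.2)]
  rfl

end Stmt11Aux

namespace Stmt11Aux

set_option linter.unusedSectionVars false

open ContextFreeGrammar

variable {T X : Type} [DecidableEq X] [Fintype X]

variable (G : ContextFreeGrammar.{0} (T ⊕ VarOp X))

abbrev NT' : Type := Q X × G.NT × Q X

/-- Decorated output of a rule, given a state assignment. -/
def decOut : List (Symbol (T ⊕ VarOp X) G.NT) → (ℕ → Q X) →
    List (Symbol (T ⊕ VarOp X) (NT' G))
  | [], _ => []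
  | Symbol.terminal a :: s, f => Symbol.terminal a :: decOut s (fun n => f (n + 1))
  | Symbol.nonterminal B :: s, f =>
      Symbol.nonterminal (f 0, B, f 1) :: decOut s (fun n => f (n + 1))

/-- The state assignment is consistent with terminal transitions. -/
def condD : List (Symbol (T ⊕ VarOp X) G.NT) → (ℕ → Q X) → Prop
  | [], _ => True
  | Symbol.terminal a :: s, f => stepP (f 0) a = some (f 1) ∧ condD s (fun n => f (n + 1))
  | Symbol.nonterminal _ :: s, f => condD s (fun n => f (n + 1))

def decRule (r : ContextFreeRule (T ⊕ VarOp X) G.NT) (f : ℕ → Q X) :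
    ContextFreeRule (T ⊕ VarOp X) (NT' G) :=
  ⟨(f 0, r.input, f r.output.length), decOut G r.output f⟩

lemma decOut_congr : ∀ (s : List (Symbol (T ⊕ VarOp X) G.NT)) (f g : ℕ → Q X),
    (∀ n ≤ s.length, f n = g n) → decOut G s f = decOut G s g := by
  intro s
  induction s with
  | nil => intro f g _; rfl
  | cons a s ih =>
    intro f g hfg
    cases a with
    | terminal a =>
      simp only [decOut]
      rw [ih _ _ (fun n hn => hfg (n + 1) (by simpa using hn))]
    | nonterminal B =>
      simp only [decOut]
      rw [hfg 0 (by simp), hfg 1 (by simp), ih _ _ (fun n hn => hfg (n + 1) (by simpa using hn))]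

lemma condD_congr : ∀ (s : List (Symbol (T ⊕ VarOp X) G.NT)) (f g : ℕ → Q X),
    (∀ n ≤ s.length, f n = g n) → (condD G s f ↔ condD G s g) := by
  intro s
  induction s with
  | nil => intro f g _; rfl
  | cons a s ih =>
    intro f g hfg
    cases a with
    | terminal a =>
      simp only [condD]
      rw [hfg 0 (by simp), hfg 1 (by simp),
        ih _ _ (fun n hn => hfg (n + 1) (by simpa using hn))]
    | nonterminal B =>
      exact ih _ _ (fun n hn => hfg (n + 1) (by simpa using hn))

/-- restriction of a tuple to a function on ℕ -/
def extF {m : ℕ} (qs : Fin (m + 1) → Q X) : ℕ → Q X :=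
  fun n => qs ⟨min n m, Nat.lt_succ_of_le (Nat.min_le_right n m)⟩

noncomputable def rules' : Finset (ContextFreeRule (T ⊕ VarOp X) (NT' G)) :=
  letI : DecidableEq (ContextFreeRule (T ⊕ VarOp X) (NT' G)) := Classical.decEq _
  letI : ∀ (r : ContextFreeRule (T ⊕ VarOp X) G.NT),
      DecidablePred (fun qs : Fin (r.output.length + 1) → Q X =>
        condD G r.output (extF qs)) := fun _ _ => Classical.propDecidable _
  G.rules.biUnion fun r =>
    (Finset.univ.filter (fun qs : Fin (r.output.length + 1) → Q X =>
      condD G r.output (extF qs))).image (fun qs => decRule G r (extF qs))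

lemma mem_rules' {r' : ContextFreeRule (T ⊕ VarOp X) (NT' G)} :
    r' ∈ rules' G ↔ ∃ r ∈ G.rules, ∃ f : ℕ → Q X,
      condD G r.output f ∧ r' = decRule G r f := by
  classical
  constructor
  · intro h
    simp only [rules', Finset.mem_biUnion, Finset.mem_image, Finset.mem_filter,
      Finset.mem_univ, true_and] at h
    obtain ⟨r, hr, qs, hcond, heq⟩ := h
    exact ⟨r, hr, extF qs, hcond, heq.symm⟩
  · rintro ⟨r, hr, f, hcond, rfl⟩
    simp only [rules', Finset.mem_biUnion, Finset.mem_image, Finset.mem_filter,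
      Finset.mem_univ, true_and]
    refine ⟨r, hr, fun i => f i, ?_, ?_⟩
    · have hagree : ∀ n ≤ r.output.length,
          extF (fun i : Fin (r.output.length + 1) => f (i : ℕ)) n = f n := by
        intro n hn
        have hmin : min n r.output.length = n := Nat.min_eq_left hn
        simp [extF, hmin]
      exact (condD_congr G _ _ _ hagree).mpr hcond
    · have hagree : ∀ n ≤ r.output.length,
          extF (fun i : Fin (r.output.length + 1) => f (i : ℕ)) n = f n := by
        intro n hn
        have hmin : min n r.output.length = n := Nat.min_eq_left hn
        simp [extF, hmin]
      simp only [decRule]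
      rw [decOut_congr G _ _ _ hagree, hagree 0 (by omega), hagree r.output.length le_rfl]

noncomputable abbrev Gdec : ContextFreeGrammar.{0} (T ⊕ VarOp X) where
  NT := NT' G
  initial := ((fun _ => 0), G.initial, (fun _ => 2))
  rules := rules' G

/-! ### Soundness: the `RunsF` invariant -/

def RunsF : Q X → List (Symbol (T ⊕ VarOp X) (NT' G)) → Q X → Prop
  | q, [], q' => q = q'
  | q, Symbol.terminal a :: s, q' => ∃ q₁, stepP q a = some q₁ ∧ RunsF q₁ s q'
  | q, Symbol.nonterminal (p, _, p') :: s, q' => p = q ∧ RunsF p' s q'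

lemma RunsF_append : ∀ (u v : List (Symbol (T ⊕ VarOp X) (NT' G))) (q q'' : Q X),
    RunsF G q (u ++ v) q'' ↔ ∃ q', RunsF G q u q' ∧ RunsF G q' v q'' := by
  intro u
  induction u with
  | nil =>
    intro v q q''
    constructor
    · intro h; exact ⟨q, rfl, h⟩
    · rintro ⟨q', rfl, h⟩; exact h
  | cons a u ih =>
    intro v q q''
    cases a with
    | terminal a =>
      simp only [List.cons_append, RunsF]
      constructor
      · rintro ⟨q₁, hs, h⟩
        obtain ⟨q', h1, h2⟩ := (ih v q₁ q'').mp h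
        exact ⟨q', ⟨q₁, hs, h1⟩, h2⟩
      · rintro ⟨q', ⟨q₁, hs, h1⟩, h2⟩
        exact ⟨q₁, hs, (ih v q₁ q'').mpr ⟨q', h1, h2⟩⟩
    | nonterminal P =>
      obtain ⟨p, B, p'⟩ := P
      simp only [List.cons_append, RunsF]
      constructor
      · rintro ⟨rfl, h⟩
        obtain ⟨q', h1, h2⟩ := (ih v p' q'').mp h
        exact ⟨q', ⟨rfl, h1⟩, h2⟩
      · rintro ⟨q', ⟨rfl, h1⟩, h2⟩
        exact ⟨rfl, (ih v p' q'').mpr ⟨q', h1, h2⟩⟩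

lemma RunsF_decOut : ∀ (s : List (Symbol (T ⊕ VarOp X) G.NT)) (f : ℕ → Q X),
    condD G s f → RunsF G (f 0) (decOut G s f) (f s.length) := by
  intro s
  induction s with
  | nil => intro f _; rfl
  | cons a s ih =>
    intro f hc
    cases a with
    | terminal a =>
      obtain ⟨h1, h2⟩ := hc
      exact ⟨f 1, h1, ih _ h2⟩
    | nonterminal B =>
      exact ⟨rfl, ih _ hc⟩

lemma RunsF_produces {u v : List (Symbol (T ⊕ VarOp X) (NT' G))}
    (h : (Gdec G).Produces u v) {q q' : Q X} (hr : RunsF G q u q') : RunsF G q v q' := by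
  obtain ⟨r', hr'mem, hrw⟩ := h
  obtain ⟨r, hrG, f, hcond, rfl⟩ := (mem_rules' G).mp hr'mem
  obtain ⟨p, t, rfl, rfl⟩ := hrw.exists_parts
  rw [List.append_assoc] at hr ⊢
  obtain ⟨q₁, hp, hrest⟩ := (RunsF_append G _ _ _ _).mp hr
  obtain ⟨q₂, hmid, ht⟩ := (RunsF_append G _ _ _ _).mp hrest
  obtain ⟨hq1, hq2⟩ : f 0 = q₁ ∧ RunsF G (f r.output.length) [] q₂ := hmid
  refine (RunsF_append G _ _ _ _).mpr ⟨q₁, hp, (RunsF_append G _ _ _ _).mpr ⟨q₂, ?_, ht⟩⟩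
  have := RunsF_decOut G r.output f hcond
  rw [hq1] at this
  have hq2' : f r.output.length = q₂ := hq2
  rwa [hq2'] at this

lemma RunsF_derives {u v : List (Symbol (T ⊕ VarOp X) (NT' G))}
    (h : (Gdec G).Derives u v) {q q' : Q X} (hr : RunsF G q u q') : RunsF G q v q' := by
  induction h with
  | refl => exact hr
  | tail _ hstep ih => exact RunsF_produces G hstep ih

lemma RunsF_terminal : ∀ (w : RefWord T X) (q q' : Q X),
    RunsF G q (w.map Symbol.terminal) q' ↔ runW q w = some q' := by
  intro w
  induction w with
  | nil =>
    intro q q'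
    simp only [List.map_nil, runW, Option.some_inj]
    exact Iff.rfl
  | cons a w ih =>
    intro q q'
    simp only [List.map_cons, RunsF, runW]
    constructor
    · rintro ⟨q₁, hs, h⟩
      rw [hs, Option.bind_some]
      exact (ih _ _).mp h
    · intro h
      obtain ⟨q₁, hs, hrun⟩ := Option.bind_eq_some_iff.mp h
      exact ⟨q₁, hs, (ih _ _).mpr hrun⟩

lemma runW_of_mem_language {w : RefWord T X} (h : w ∈ (Gdec G).language) :
    runW (fun _ => 0) w = some (fun _ => (2 : Fin 3)) := by
  have hder : (Gdec G).Derives [Symbol.nonterminal (Gdec G).initial]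
      (w.map Symbol.terminal) := h
  have hinit : RunsF G (fun _ => 0) [Symbol.nonterminal (Gdec G).initial]
      (fun _ => (2 : Fin 3)) := ⟨rfl, rfl⟩
  exact (RunsF_terminal G w _ _).mp (RunsF_derives G hder hinit)

/-! ### Projection: L(Gdec) ⊆ L(G) -/

def projSym : Symbol (T ⊕ VarOp X) (NT' G) → Symbol (T ⊕ VarOp X) G.NT
  | Symbol.terminal a => Symbol.terminal a
  | Symbol.nonterminal (_, B, _) => Symbol.nonterminal B

lemma projSym_decOut : ∀ (s : List (Symbol (T ⊕ VarOp X) G.NT)) (f : ℕ → Q X),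
    (decOut G s f).map (projSym G) = s := by
  intro s
  induction s with
  | nil => intro f; rfl
  | cons a s ih =>
    intro f
    cases a with
    | terminal a => simp only [decOut, List.map_cons, projSym, ih]
    | nonterminal B => simp only [decOut, List.map_cons, projSym, ih]

lemma produces_proj {u v : List (Symbol (T ⊕ VarOp X) (NT' G))}
    (h : (Gdec G).Produces u v) :
    G.Produces (u.map (projSym G)) (v.map (projSym G)) := by
  obtain ⟨r', hr'mem, hrw⟩ := h
  obtain ⟨r, hrG, f, hcond, rfl⟩ := (mem_rules' G).mp hr'mem
  obtain ⟨p, t, rfl, rfl⟩ := hrw.exists_parts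
  refine ⟨r, hrG, ?_⟩
  have h1 : ((p ++ [Symbol.nonterminal (decRule G r f).input] ++ t).map (projSym G)) =
      p.map (projSym G) ++ [Symbol.nonterminal r.input] ++ t.map (projSym G) := by
    simp [decRule, projSym]
  have h2 : ((p ++ (decRule G r f).output ++ t).map (projSym G)) =
      p.map (projSym G) ++ r.output ++ t.map (projSym G) := by
    simp only [List.map_append, decRule]
    rw [projSym_decOut]
  rw [h1, h2]
  exact ContextFreeRule.rewrites_of_exists_parts r _ _

lemma mem_language_of_mem_Gdec {w : RefWord T X} (h : w ∈ (Gdec G).language) :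
    w ∈ G.language := by
  have hder : (Gdec G).Derives [Symbol.nonterminal (Gdec G).initial]
      (w.map Symbol.terminal) := h
  have derives_proj : ∀ {u v : List (Symbol (T ⊕ VarOp X) (NT' G))},
      (Gdec G).Derives u v → G.Derives (u.map (projSym G)) (v.map (projSym G)) := by
    intro u v h
    induction h with
    | refl => exact Derives.refl _
    | tail _ hstep ih => exact ih.trans_produces (produces_proj G hstep)
  have := derives_proj hder
  simp only [List.map_cons, List.map_nil, List.map_map] at this
  have hmap : (w.map (projSym G ∘ Symbol.terminal)) = w.map Symbol.terminal := rfl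
  rw [hmap] at this
  exact this

end Stmt11Aux

namespace Stmt11Aux

open ContextFreeGrammar

/-! ### Counted derivations and splitting -/

variable {U : Type}

inductive DerIn (g : ContextFreeGrammar.{0} U) :
    List (Symbol U g.NT) → List (Symbol U g.NT) → ℕ → Prop
  | refl (u : List (Symbol U g.NT)) : DerIn g u u 0
  | head {u v w : List (Symbol U g.NT)} {n : ℕ} :
      g.Produces u v → DerIn g v w n → DerIn g u w (n + 1)

lemma derives_iff_derIn {g : ContextFreeGrammar.{0} U} {u v : List (Symbol U g.NT)} :
    g.Derives u v ↔ ∃ n, DerIn g u v n := by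
  constructor
  · intro h
    induction h using Relation.ReflTransGen.head_induction_on with
    | refl => exact ⟨0, DerIn.refl v⟩
    | head hstep _ ih =>
      obtain ⟨n, hn⟩ := ih
      exact ⟨n + 1, DerIn.head hstep hn⟩
  · rintro ⟨n, h⟩
    induction h with
    | refl => exact Derives.refl _
    | head hstep _ ih => exact hstep.trans_derives ih

lemma rewrites_append {N : Type} {r : ContextFreeRule U N} {u v w : List (Symbol U N)}
    (h : r.Rewrites (u ++ v) w) :
    (∃ u', r.Rewrites u u' ∧ w = u' ++ v) ∨ (∃ v', r.Rewrites v v' ∧ w = u ++ v') := by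
  obtain ⟨p, t, h1, rfl⟩ := h.exists_parts
  rw [List.append_assoc] at h1
  rcases List.append_eq_append_iff.mp h1 with ⟨a', hpa, hnt⟩ | ⟨c', hu, hv⟩
  · -- p = u ++ a', [nt] ++ t = a' ++ v
    subst hpa
    right
    refine ⟨a' ++ r.output ++ t, ?_, by simp⟩
    have hv : v = a' ++ [Symbol.nonterminal r.input] ++ t := by
      rw [List.append_assoc]; exact hnt
    rw [hv]
    exact ContextFreeRule.rewrites_of_exists_parts r a' t
  · -- u = p ++ c', t = c' ++ v
    subst hu
    rcases c' with _ | ⟨s, c''⟩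
    · -- c' = [] : u = p, [nt] ++ t = v
      right
      simp only [List.append_nil] at *
      refine ⟨r.output ++ t, ?_, by simp⟩
      have hv' : v = [] ++ [Symbol.nonterminal r.input] ++ t := by simpa using hv.symm
      rw [hv']
      simpa using ContextFreeRule.rewrites_of_exists_parts r [] t
    · -- c' = s :: c''
      left
      have hs : Symbol.nonterminal r.input = s ∧ t = c'' ++ v := by
        injection hv with ha hb
        exact ⟨ha, hb⟩
      obtain ⟨hs1, rfl⟩ := hs
      refine ⟨p ++ r.output ++ c'', ?_, by simp⟩
      have hu' : p ++ (Symbol.nonterminal r.input :: c'') =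
          p ++ [Symbol.nonterminal r.input] ++ c'' := by simp
      rw [← hs1, hu']
      exact ContextFreeRule.rewrites_of_exists_parts r p c''

lemma derIn_append {g : ContextFreeGrammar.{0} U} :
    ∀ {n : ℕ} {u v w : List (Symbol U g.NT)}, DerIn g (u ++ v) w n →
    ∃ w1 w2 n1 n2, w = w1 ++ w2 ∧ n1 + n2 = n ∧ DerIn g u w1 n1 ∧ DerIn g v w2 n2 := by
  intro n
  induction n with
  | zero =>
    intro u v w h
    cases h
    exact ⟨u, v, 0, 0, rfl, rfl, DerIn.refl u, DerIn.refl v⟩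
  | succ n ih =>
    intro u v w h
    cases h with
    | head hstep hd =>
      obtain ⟨r, hrmem, hrw⟩ := hstep
      rcases rewrites_append hrw with ⟨u', hru, rfl⟩ | ⟨v', hrv, rfl⟩
      · obtain ⟨w1, w2, n1, n2, rfl, hn, h1, h2⟩ := ih hd
        exact ⟨w1, w2, n1 + 1, n2, rfl, by omega, DerIn.head ⟨r, hrmem, hru⟩ h1, h2⟩
      · obtain ⟨w1, w2, n1, n2, rfl, hn, h1, h2⟩ := ih hd
        exact ⟨w1, w2, n1, n2 + 1, rfl, by omega, h1, DerIn.head ⟨r, hrmem, hrv⟩ h2⟩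

lemma derIn_zero' {g : ContextFreeGrammar.{0} U} {u v : List (Symbol U g.NT)}
    (h : DerIn g u v 0) : u = v := by
  cases h; rfl

lemma derIn_succ' {g : ContextFreeGrammar.{0} U} {u w : List (Symbol U g.NT)} {n : ℕ}
    (h : DerIn g u w (n + 1)) : ∃ v, g.Produces u v ∧ DerIn g v w n := by
  cases h with
  | head hstep hd => exact ⟨_, hstep, hd⟩

lemma derIn_terminal {g : ContextFreeGrammar.{0} U} {u : List U}
    {w : List (Symbol U g.NT)} {n : ℕ} (h : DerIn g (u.map Symbol.terminal) w n) :
    w = u.map Symbol.terminal := by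
  cases h with
  | refl => rfl
  | head hstep hd =>
    exfalso
    obtain ⟨r, _, hrw⟩ := hstep
    obtain ⟨p, t, h1, _⟩ := hrw.exists_parts
    have : Symbol.nonterminal r.input ∈ u.map (Symbol.terminal (N := g.NT)) := by
      rw [h1]; simp
    simp only [List.mem_map] at this
    obtain ⟨a, _, ha⟩ := this
    exact nomatch ha

/-! ### Completeness -/

variable {T X : Type} [DecidableEq X] [Fintype X]
variable (G : ContextFreeGrammar.{0} (T ⊕ VarOp X))

lemma inner_lift (n : ℕ)
    (ih : ∀ m < n, ∀ (B : G.NT) (w : RefWord T X) (q q' : Q X),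
      DerIn G [Symbol.nonterminal B] (w.map Symbol.terminal) m →
      runW q w = some q' →
      (Gdec G).Derives [Symbol.nonterminal (q, B, q')] (w.map Symbol.terminal)) :
    ∀ (s : List (Symbol (T ⊕ VarOp X) G.NT)) (w : RefWord T X) (q q' : Q X) (m : ℕ),
      m < n → DerIn G s (w.map Symbol.terminal) m → runW q w = some q' →
      ∃ f : ℕ → Q X, f 0 = q ∧ f s.length = q' ∧ condD G s f ∧
        (Gdec G).Derives (decOut G s f) (w.map Symbol.terminal) := by
  intro s
  induction s with
  | nil =>
    intro w q q' m _ hd hrun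
    have hw : w.map (Symbol.terminal (N := G.NT)) = [] := by
      have := derIn_terminal (u := ([] : RefWord T X)) (by simpa using hd)
      simpa using this.symm
    have hwnil : w = [] := by simpa using hw
    subst hwnil
    have hq : q = q' := by simpa [runW] using hrun
    subst hq
    refine ⟨fun _ => q, rfl, rfl, trivial, ?_⟩
    simp only [List.map_nil, decOut]
    exact Derives.refl _
  | cons sym s' ihs =>
    intro w q q' m hm hd hrun
    have hd' : DerIn G ([sym] ++ s') (w.map Symbol.terminal) m := hd
    obtain ⟨w1, w2, n1, n2, hw, hn, h1, h2⟩ := derIn_append hd'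
    obtain ⟨u1, u2, rfl, hw1, hw2⟩ := List.map_eq_append_iff.mp hw
    subst hw1; subst hw2
    rw [runW_append] at hrun
    obtain ⟨qm, hq1, hq2⟩ := Option.bind_eq_some_iff.mp hrun
    obtain ⟨f', hf0, hflen, hcond, hder⟩ :=
      ihs u2 qm q' n2 (by omega) h2 hq2
    cases sym with
    | terminal a =>
      have hu1 : u1 = [a] := by
        have h1a : u1.map (Symbol.terminal (N := G.NT)) = [Symbol.terminal a] :=
          derIn_terminal (u := [a]) (by simpa using h1)
        match u1, h1a with
        | [b], hb => simp at hb; rw [hb]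
      subst hu1
      have hstep : stepP q a = some qm := by
        simp only [runW] at hq1
        obtain ⟨p, hp, hp2⟩ := Option.bind_eq_some_iff.mp hq1
        simp only [runW, Option.some_inj] at hp2
        rwa [hp2] at hp
      refine ⟨fun nn => match nn with | 0 => q | Nat.succ kk => f' kk, rfl, ?_, ?_, ?_⟩
      · exact hflen
      · refine ⟨?_, hcond⟩
        show stepP q a = some (f' 0)
        rw [hf0]
        exact hstep
      · show (Gdec G).Derives (Symbol.terminal a :: decOut G s' f')
          ((([a] : RefWord T X) ++ u2).map Symbol.terminal)
        rw [List.map_append]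
        exact Derives.append_left hder [Symbol.terminal a]
    | nonterminal B =>
      have hderB : (Gdec G).Derives [Symbol.nonterminal (q, B, qm)]
          (u1.map Symbol.terminal) := ih n1 (by omega) B u1 q qm h1 hq1
      refine ⟨fun nn => match nn with | 0 => q | Nat.succ kk => f' kk, rfl, ?_, ?_, ?_⟩
      · exact hflen
      · exact hcond
      · show (Gdec G).Derives (Symbol.nonterminal (q, B, f' 0) :: decOut G s' f')
          ((u1 ++ u2).map Symbol.terminal)
        rw [List.map_append, hf0]
        have : (Gdec G).Derives
            ([Symbol.nonterminal (q, B, qm)] ++ decOut G s' f')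
            (u1.map Symbol.terminal ++ u2.map Symbol.terminal) :=
          (hderB.append_right _).trans (Derives.append_left hder _)
        simpa using this

lemma main_lift : ∀ (n : ℕ) (B : G.NT) (w : RefWord T X) (q q' : Q X),
    DerIn G [Symbol.nonterminal B] (w.map Symbol.terminal) n →
    runW q w = some q' →
    (Gdec G).Derives [Symbol.nonterminal (q, B, q')] (w.map Symbol.terminal) := by
  intro n
  induction n using Nat.strong_induction_on with
  | _ n ihn =>
    intro B w q q' h hrun
    cases n with
    | zero =>
      exfalso
      have hbad := derIn_zero' h
      cases w with
      | nil => simp at hbad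
      | cons a w => simp at hbad
    | succ m =>
      obtain ⟨v, hstep, hd⟩ := derIn_succ' h
      obtain ⟨r, hrmem, hrw⟩ := hstep
      obtain ⟨p, t, h1, h2⟩ := hrw.exists_parts
      have hpt : p = [] ∧ t = [] ∧ r.input = B := by
        cases p with
        | nil =>
          simp only [List.nil_append] at h1
          refine ⟨rfl, ?_, ?_⟩
          · have := h1
            rw [List.cons_append] at this
            injection this with _ h2'
            simpa using h2'.symm
          · have := h1
            rw [List.cons_append] at this
            injection this with h1' _
            injection h1' with h
            exact h.symm
        | cons x p' =>
          exfalso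
          have hlen := congrArg List.length h1
          simp at hlen
      obtain ⟨rfl, rfl, hinput⟩ := hpt
      simp only [List.nil_append, List.append_nil] at h2
      subst h2
      obtain ⟨f, hf0, hflen, hcond, hder⟩ :=
        inner_lift G (m + 1) (fun m' hm' => ihn m' hm') r.output w q q' m (by omega) hd hrun
      have hrule : decRule G r f ∈ (Gdec G).rules :=
        (mem_rules' G).mpr ⟨r, hrmem, f, hcond, rfl⟩
      have hprod : (Gdec G).Produces [Symbol.nonterminal (q, B, q')] (decOut G r.output f) := by
        refine ⟨decRule G r f, hrule, ?_⟩
        have : (decRule G r f).input = (q, B, q') := by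
          simp only [decRule, hf0, hflen, hinput]
        rw [← this]
        exact ContextFreeRule.Rewrites.input_output
      exact hprod.trans_derives hder

lemma mem_Gdec_of_valid {w : RefWord T X} (hG : w ∈ G.language)
    (hrun : runW (fun _ => 0) w = some (fun _ => (2 : Fin 3))) :
    w ∈ (Gdec G).language := by
  obtain ⟨n, hn⟩ := derives_iff_derIn.mp hG
  exact main_lift G n G.initial w _ _ hn hrun

end Stmt11Aux

/-- Every extraction grammar can be converted to an equivalent functional one (every generated
ref-word is valid); if the original is in CNF, the functional grammar can be taken with at most
`3^(2k) · |V|` nonterminals. -/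
theorem stmt11 (T X : Type) [Fintype X] (k : ℕ) (hk : Fintype.card X = k)
    (G : ContextFreeGrammar.{0} (T ⊕ VarOp X)) (hfin : Finite G.NT) :
    ∃ G' : ContextFreeGrammar.{0} (T ⊕ VarOp X),
      (∀ r : RefWord T X, r ∈ G'.language → ValidRef r) ∧
      (∀ d : List T, spanner G' d = spanner G d) ∧
      (InCNF G → Nat.card G'.NT ≤ 3 ^ (2 * k) * Nat.card G.NT) := by
  letI : DecidableEq X := Classical.decEq X
  refine ⟨Stmt11Aux.Gdec G, ?_, ?_, ?_⟩
  · intro r hr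
    exact Stmt11Aux.valid_of_runW (Stmt11Aux.runW_of_mem_language G hr)
  · intro d
    ext μ
    simp only [spanner, Set.mem_setOf_eq]
    constructor
    · rintro ⟨r, hrL, hval, hclr, hmap⟩
      exact ⟨r, Stmt11Aux.mem_language_of_mem_Gdec G hrL, hval, hclr, hmap⟩
    · rintro ⟨r, hrL, hval, hclr, hmap⟩
      exact ⟨r, Stmt11Aux.mem_Gdec_of_valid G hrL (Stmt11Aux.runW_of_valid hval),
        hval, hclr, hmap⟩
  · intro _
    have hQ : Nat.card (Stmt11Aux.Q X) = 3 ^ k := by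
      rw [Nat.card_fun, Nat.card_eq_fintype_card, Nat.card_eq_fintype_card,
        Fintype.card_fin, hk]
    have hcard : Nat.card (Stmt11Aux.Gdec G).NT = 3 ^ (2 * k) * Nat.card G.NT := by
      show Nat.card (Stmt11Aux.Q X × G.NT × Stmt11Aux.Q X) = _
      rw [Nat.card_prod, Nat.card_prod, hQ, two_mul, pow_add]
      ring
    exact le_of_eq hcard
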